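/- Let n ∈ ℕ, R₀ > 0, a₁,…,a_n ∈ B(0,R₀) ⊂ ℝ², v₁,…,v_n > 0, and let λ > 1 satisfy (λ²-1)πR₀² = Σᵢvᵢ. Define σ = min{ min_i (1 - |a_i|/R₀)² / (v_i/Σv_k), min_{i≠j} |a_i - a_j|² / (R₀²(√(v_i/Σv_k) + √(v_j/Σv_k))²) }. If σ ≥ 1, or if σ < 1 and λ² < 1/(1-σ), then the trajectories z_i(t) = t a_i and radii L_i(t) = R₀ √((t²-1) v_i/Σv_k), t ∈ [1,λ], are such that for every t ∈ [1,λ] the closed disks closure(B(z_i(t), L_i(t))), i = 1,…,n, are pairwise disjoint and contained in B(0, tR₀); moreover Σᵢ πL_i(t)² = (t²-1)πR₀², z_i(1)=a_i, L_i(1)=0, and πL_i(λ)² = v_i. -/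

import Mathlib

open Real

set_option maxHeartbeats 800000 in
theorem attainable_configuration (n : ℕ) (hn : 0 < n) (R₀ : ℝ) (hR₀ : 0 < R₀)
    (a : Fin n → EuclideanSpace ℝ (Fin 2)) (v : Fin n → ℝ)
    (ha : ∀ i, ‖a i‖ < R₀) (hv : ∀ i, 0 < v i)
    (lam : ℝ) (hlam : 1 < lam)
    (hsum : (lam ^ 2 - 1) * π * R₀ ^ 2 = ∑ i, v i)
    (σ : ℝ)
    (hσ : σ = sInf
      ((Set.range fun i => (1 - ‖a i‖ / R₀) ^ 2 / (v i / ∑ k, v k)) ∪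
        {x | ∃ i j, i ≠ j ∧ x = ‖a i - a j‖ ^ 2 /
          (R₀ ^ 2 * (Real.sqrt (v i / ∑ k, v k) + Real.sqrt (v j / ∑ k, v k)) ^ 2)}))
    (hcase : 1 ≤ σ ∨ (σ < 1 ∧ lam ^ 2 < 1 / (1 - σ))) :
    (∀ t ∈ Set.Icc (1 : ℝ) lam,
      (∀ i j, i ≠ j →
        Disjoint
          (Metric.closedBall (t • a i) (R₀ * Real.sqrt ((t ^ 2 - 1) * (v i / ∑ k, v k))))
          (Metric.closedBall (t • a j) (R₀ * Real.sqrt ((t ^ 2 - 1) * (v j / ∑ k, v k))))) ∧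
      (∀ i,
        Metric.closedBall (t • a i) (R₀ * Real.sqrt ((t ^ 2 - 1) * (v i / ∑ k, v k)))
          ⊆ Metric.ball (0 : EuclideanSpace ℝ (Fin 2)) (t * R₀)) ∧
      (∑ i, π * (R₀ * Real.sqrt ((t ^ 2 - 1) * (v i / ∑ k, v k))) ^ 2
        = (t ^ 2 - 1) * π * R₀ ^ 2)) ∧
    (∀ i, (1 : ℝ) • a i = a i ∧
      R₀ * Real.sqrt (((1 : ℝ) ^ 2 - 1) * (v i / ∑ k, v k)) = 0 ∧
      π * (R₀ * Real.sqrt ((lam ^ 2 - 1) * (v i / ∑ k, v k))) ^ 2 = v i) := by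
  have hne : Nonempty (Fin n) := Fin.pos_iff_nonempty.mp hn
  set S := ∑ k, v k with hSdef
  have hS : 0 < S := Finset.sum_pos (fun i _ => hv i) Finset.univ_nonempty
  have hw : ∀ i, 0 < v i / S := fun i => div_pos (hv i) hS
  -- bounded below
  have hbdd : BddBelow
      ((Set.range fun i => (1 - ‖a i‖ / R₀) ^ 2 / (v i / S)) ∪
        {x | ∃ i j, i ≠ j ∧ x = ‖a i - a j‖ ^ 2 /
          (R₀ ^ 2 * (Real.sqrt (v i / S) + Real.sqrt (v j / S)) ^ 2)}) := by
    refine ⟨0, fun x hx => ?_⟩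
    rcases hx with ⟨i, rfl⟩ | ⟨i, j, _, rfl⟩
    · exact div_nonneg (sq_nonneg _) (hw i).le
    · positivity
  have hσ1 : ∀ i, σ ≤ (1 - ‖a i‖ / R₀) ^ 2 / (v i / S) := fun i =>
    hσ ▸ csInf_le hbdd (Or.inl ⟨i, rfl⟩)
  have hσ2 : ∀ i j, i ≠ j → σ ≤ ‖a i - a j‖ ^ 2 /
      (R₀ ^ 2 * (Real.sqrt (v i / S) + Real.sqrt (v j / S)) ^ 2) := fun i j hij =>
    hσ ▸ csInf_le hbdd (Or.inr ⟨i, j, hij, rfl⟩)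
  have hσpos : 0 < σ := by
    rcases hcase with h | ⟨h1, h2⟩
    · linarith
    · have h3 : (0:ℝ) < 1 - σ := by linarith
      have : (1:ℝ) < 1 / (1 - σ) := lt_trans (by nlinarith) h2
      rw [lt_div_iff₀ h3] at this
      linarith
  have hkey : ∀ t ∈ Set.Icc (1:ℝ) lam, 1 - 1 / t ^ 2 < σ := by
    intro t ht
    obtain ⟨ht1, ht2⟩ := ht
    have htpos : (0:ℝ) < t := by linarith
    have ht2sq : t ^ 2 ≤ lam ^ 2 := by nlinarith
    rcases hcase with h | ⟨h1, h2⟩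
    · have : 0 < 1 / t ^ 2 := by positivity
      linarith
    · have h3 : (0:ℝ) < 1 - σ := by linarith
      have hl2 : (0:ℝ) < lam ^ 2 := by positivity
      have : 1 - σ < 1 / lam ^ 2 := by
        rw [lt_div_iff₀ hl2]
        calc (1 - σ) * lam ^ 2 < (1 - σ) * (1 / (1 - σ)) := by
              exact mul_lt_mul_of_pos_left h2 h3
          _ = 1 := by field_simp
      have : 1 / lam ^ 2 ≤ 1 / t ^ 2 := by
        apply one_div_le_one_div_of_le (by positivity) ht2sq
      linarith [show 1 - σ < 1 / lam ^ 2 from by assumption]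
  constructor
  · intro t ht
    obtain ⟨ht1, ht2⟩ := ht
    have htpos : (0:ℝ) < t := by linarith
    have htsq : (0:ℝ) ≤ t ^ 2 - 1 := by nlinarith
    have hkt := hkey t ⟨ht1, ht2⟩
    have hkt' : t ^ 2 - 1 < σ * t ^ 2 := by
      have h0 : (0:ℝ) < t ^ 2 := by positivity
      have h1 := mul_lt_mul_of_pos_right hkt h0
      have heq : (1 - 1 / t ^ 2) * t ^ 2 = t ^ 2 - 1 := by field_simp
      linarith
    refine ⟨?_, ?_, ?_⟩
    · -- disjoint
      intro i j hij
      apply Metric.closedBall_disjoint_closedBall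
      have hDpos : (0:ℝ) < R₀ ^ 2 * (Real.sqrt (v i / S) + Real.sqrt (v j / S)) ^ 2 := by
        have := Real.sqrt_pos.mpr (hw i)
        have := Real.sqrt_pos.mpr (hw j)
        positivity
      have h2 := hσ2 i j hij
      have hD : σ * (R₀ ^ 2 * (Real.sqrt (v i / S) + Real.sqrt (v j / S)) ^ 2)
          ≤ ‖a i - a j‖ ^ 2 := by
        rw [le_div_iff₀ hDpos] at h2; linarith
      have hdist : dist (t • a i) (t • a j) = t * ‖a i - a j‖ := by
        rw [dist_eq_norm, ← smul_sub, norm_smul, Real.norm_eq_abs, abs_of_pos htpos]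
      rw [hdist]
      have hLi : R₀ * Real.sqrt ((t ^ 2 - 1) * (v i / S))
          = R₀ * (Real.sqrt (t ^ 2 - 1) * Real.sqrt (v i / S)) := by
        rw [Real.sqrt_mul htsq]
      have hLj : R₀ * Real.sqrt ((t ^ 2 - 1) * (v j / S))
          = R₀ * (Real.sqrt (t ^ 2 - 1) * Real.sqrt (v j / S)) := by
        rw [Real.sqrt_mul htsq]
      rw [hLi, hLj]
      have hsum' : R₀ * (Real.sqrt (t ^ 2 - 1) * Real.sqrt (v i / S))
          + R₀ * (Real.sqrt (t ^ 2 - 1) * Real.sqrt (v j / S))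
          = R₀ * Real.sqrt (t ^ 2 - 1) * (Real.sqrt (v i / S) + Real.sqrt (v j / S)) := by
        ring
      rw [hsum']
      have htn : (0:ℝ) ≤ t * ‖a i - a j‖ := by positivity
      refine lt_of_pow_lt_pow_left₀ 2 htn ?_
      have hsq : (Real.sqrt (t ^ 2 - 1)) ^ 2 = t ^ 2 - 1 := Real.sq_sqrt htsq
      have expand : (R₀ * Real.sqrt (t ^ 2 - 1) * (Real.sqrt (v i / S) + Real.sqrt (v j / S))) ^ 2
          = (t ^ 2 - 1) * (R₀ ^ 2 * (Real.sqrt (v i / S) + Real.sqrt (v j / S)) ^ 2) := by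
        rw [mul_pow, mul_pow, hsq]; ring
      rw [expand, mul_pow]
      nlinarith [hkt', hD, hDpos, sq_nonneg (‖a i - a j‖)]
    · -- containment
      intro i x hx
      have h1 := hσ1 i
      have hwle : σ * (v i / S) ≤ (1 - ‖a i‖ / R₀) ^ 2 := by
        rw [le_div_iff₀ (hw i)] at h1; linarith
      have hra : 0 < 1 - ‖a i‖ / R₀ := by
        have := ha i
        rw [sub_pos, div_lt_one hR₀]; exact this
      have hLlt : Real.sqrt ((t ^ 2 - 1) * (v i / S)) < t * (1 - ‖a i‖ / R₀) := by
        rw [Real.sqrt_lt' (mul_pos htpos hra)]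
        have : (t ^ 2 - 1) * (v i / S) < σ * t ^ 2 * (v i / S) :=
          mul_lt_mul_of_pos_right hkt' (hw i)
        calc (t ^ 2 - 1) * (v i / S) < σ * t ^ 2 * (v i / S) := this
          _ = t ^ 2 * (σ * (v i / S)) := by ring
          _ ≤ t ^ 2 * (1 - ‖a i‖ / R₀) ^ 2 := by
              apply mul_le_mul_of_nonneg_left hwle (by positivity)
          _ = (t * (1 - ‖a i‖ / R₀)) ^ 2 := by ring
      have hL2 : R₀ * Real.sqrt ((t ^ 2 - 1) * (v i / S)) < t * R₀ - t * ‖a i‖ := by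
        have := mul_lt_mul_of_pos_left hLlt hR₀
        calc R₀ * Real.sqrt ((t ^ 2 - 1) * (v i / S)) < R₀ * (t * (1 - ‖a i‖ / R₀)) := this
          _ = t * R₀ - t * ‖a i‖ := by field_simp
      simp only [Metric.mem_closedBall] at hx
      simp only [Metric.mem_ball]
      calc dist x 0 ≤ dist x (t • a i) + dist (t • a i) 0 := dist_triangle _ _ _
        _ ≤ R₀ * Real.sqrt ((t ^ 2 - 1) * (v i / S)) + t * ‖a i‖ := by
            have : dist (t • a i) 0 = t * ‖a i‖ := by
              rw [dist_zero_right, norm_smul, Real.norm_eq_abs, abs_of_pos htpos]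
            rw [this]; linarith
        _ < t * R₀ := by linarith
    · -- sum
      have hterm : ∀ i, π * (R₀ * Real.sqrt ((t ^ 2 - 1) * (v i / S))) ^ 2
          = π * R₀ ^ 2 * (t ^ 2 - 1) / S * v i := by
        intro i
        rw [mul_pow, Real.sq_sqrt (mul_nonneg htsq (hw i).le)]
        field_simp
      rw [Finset.sum_congr rfl fun i _ => hterm i, ← Finset.mul_sum, ← hSdef]
      field_simp
  · intro i
    refine ⟨one_smul _ _, by norm_num, ?_⟩
    have hl : (0:ℝ) ≤ lam ^ 2 - 1 := by nlinarith
    rw [mul_pow, Real.sq_sqrt (mul_nonneg hl (hw i).le)]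
    have heq : π * (R₀ ^ 2 * ((lam ^ 2 - 1) * (v i / S))) = ((lam ^ 2 - 1) * π * R₀ ^ 2) * (v i / S) := by ring
    rw [heq, hsum, mul_div_cancel₀ _ hS.ne']
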